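/- (Gradient bound, cf. (11).) Let N ≥ 2, λ > 0, ζ ∈ ℝ, R > 0, m ∈ ℝ, and let f : ℝ → ℝ be continuous with F(u) := ∫₀ᵘ f(s) ds. Let u ∈ C²([0,R)) satisfy |u'(r)| < 1, u(0) = ζ, u'(0) = 0, the radial equation (u'(r)/√(1−u'(r)²))' + ((N−1)/r)·u'(r)/√(1−u'(r)²) + λ·f(u(r)) = 0 on (0,R), and suppose F(u(r)) ≥ m for all r ∈ [0,R). Then, with C := λ·(F(ζ) − m) ≥ 0, one has H(u'(r)) ≤ C for all r ∈ [0,R), where H(t) := (1−√(1−t²))/√(1−t²); consequently u'(r)² ≤ 1 − 1/(1+C)² for all r ∈ [0,R), i.e. sup_{[0,R)} |u'| ≤ 1 − ε for some ε > 0 depending only on C. -/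

import Mathlib

open Set Filter

lemma key_sqrt {t : ℝ} (h : 0 < 1 - t^2) :
    Real.sqrt (1 + (t / Real.sqrt (1 - t^2))^2) = 1 / Real.sqrt (1 - t^2) := by
  have hs : 0 < Real.sqrt (1 - t^2) := Real.sqrt_pos.2 h
  have hsq : (Real.sqrt (1 - t^2))^2 = 1 - t^2 := Real.sq_sqrt h.le
  have h1 : 1 + (t / Real.sqrt (1 - t^2))^2 = (1 / Real.sqrt (1 - t^2))^2 := by
    field_simp
    rw [hsq]; ring
  rw [h1, Real.sqrt_sq (by positivity)]

lemma sqrt_one_add_sq_hasDerivAt (x : ℝ) :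
    HasDerivAt (fun y : ℝ => Real.sqrt (1 + y^2)) (x / Real.sqrt (1 + x^2)) x := by
  have h1 : (0:ℝ) < 1 + x^2 := by positivity
  have hx : HasDerivAt (fun y : ℝ => 1 + y^2) (2*x) x := by
    simpa using ((hasDerivAt_pow 2 x).const_add 1)
  have h2 : HasDerivAt (fun y : ℝ => Real.sqrt (1 + y^2)) (1 / (2 * Real.sqrt (1 + x ^ 2)) * (2 * x)) x :=
    (Real.hasDerivAt_sqrt h1.ne').comp x hx
  convert h2 using 1
  have hs : 0 < Real.sqrt (1 + x^2) := Real.sqrt_pos.2 h1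
  field_simp

/-- gradient bound, cf. (11): if `F(u(r)) ≥ m` along a solution on `[0,R)`,
then with `C = λ(F(ζ) - m)` one has `H(u'(r)) ≤ C`, hence
`u'(r)² ≤ 1 - 1/(1+C)²`, i.e. `|u'| ≤ 1 - ε` for some `ε > 0` depending only on `C`. -/
theorem gradient_bound
    (N : ℕ) (hN : 2 ≤ N) (lam : ℝ) (hlam : 0 < lam) (ζ R m : ℝ) (hR : 0 < R)
    (f : ℝ → ℝ) (hf : Continuous f)
    (u u' : ℝ → ℝ)
    (hu : ContDiffOn ℝ 2 u (Set.Ico 0 R))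
    (hu' : ∀ r ∈ Set.Ico (0:ℝ) R, HasDerivWithinAt u (u' r) (Set.Ico 0 R) r)
    (hu'bd : ∀ r ∈ Set.Ico (0:ℝ) R, |u' r| < 1)
    (hu0 : u 0 = ζ) (hu'0 : u' 0 = 0)
    (hode : ∀ r ∈ Set.Ico (0:ℝ) R, 0 < r →
      HasDerivWithinAt (fun s => u' s / Real.sqrt (1 - (u' s) ^ 2))
        (-(((N : ℝ) - 1) / r * (u' r / Real.sqrt (1 - (u' r) ^ 2)) + lam * f (u r)))
        (Set.Ico 0 R) r)
    (hF : ∀ r ∈ Set.Ico (0:ℝ) R, m ≤ ∫ s in (0:ℝ)..(u r), f s) :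
    0 ≤ lam * ((∫ s in (0:ℝ)..ζ, f s) - m) ∧
    (∀ r ∈ Set.Ico (0:ℝ) R,
      (1 - Real.sqrt (1 - (u' r) ^ 2)) / Real.sqrt (1 - (u' r) ^ 2) ≤
        lam * ((∫ s in (0:ℝ)..ζ, f s) - m)) ∧
    (∀ r ∈ Set.Ico (0:ℝ) R,
      (u' r) ^ 2 ≤ 1 - 1 / (1 + lam * ((∫ s in (0:ℝ)..ζ, f s) - m)) ^ 2) ∧
    ∃ ε > (0:ℝ), ∀ r ∈ Set.Ico (0:ℝ) R, |u' r| ≤ 1 - ε := by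
  set F : ℝ → ℝ := fun x => ∫ s in (0:ℝ)..x, f s with hFdef
  have hFder : ∀ x, HasDerivAt F (f x) x := fun x =>
    intervalIntegral.integral_hasDerivAt_right (hf.intervalIntegrable 0 x)
      hf.aestronglyMeasurable.stronglyMeasurableAtFilter hf.continuousAt
  have hFc : Continuous F := continuous_iff_continuousAt.2 fun x => (hFder x).continuousAt
  set C : ℝ := lam * (F ζ - m) with hCdef
  have hmem0 : (0:ℝ) ∈ Ico (0:ℝ) R := ⟨le_refl 0, hR⟩
  have hFz : m ≤ F ζ := by
    have h := hF 0 hmem0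
    rwa [hu0] at h
  have hC0 : 0 ≤ C := mul_nonneg hlam.le (by linarith)
  have hpos : ∀ r ∈ Ico (0:ℝ) R, 0 < 1 - (u' r)^2 := by
    intro r hr
    have h := hu'bd r hr
    nlinarith [abs_nonneg (u' r), sq_abs (u' r)]
  have hspos : ∀ r ∈ Ico (0:ℝ) R, 0 < Real.sqrt (1 - (u' r)^2) :=
    fun r hr => Real.sqrt_pos.2 (hpos r hr)
  -- the energy
  set E : ℝ → ℝ := fun r =>
    Real.sqrt (1 + (u' r / Real.sqrt (1 - (u' r)^2))^2) + lam * F (u r) with hEdef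
  have hEeq : ∀ r ∈ Ico (0:ℝ) R,
      E r = 1 / Real.sqrt (1 - (u' r)^2) + lam * F (u r) := by
    intro r hr
    simp only [hEdef, key_sqrt (hpos r hr)]
  -- continuity of E
  have hud : UniqueDiffOn ℝ (Ico (0:ℝ) R) := uniqueDiffOn_Ico 0 R
  have hu'c : ContinuousOn u' (Ico (0:ℝ) R) := by
    have h1 := hu.continuousOn_derivWithin hud one_le_two
    exact h1.congr fun r hr => ((hu' r hr).derivWithin (hud r hr)).symm
  have hsdc : ContinuousOn (fun r => Real.sqrt (1 - (u' r)^2)) (Ico (0:ℝ) R) :=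
    Real.continuous_sqrt.comp_continuousOn (continuousOn_const.sub (hu'c.pow 2))
  have hwc : ContinuousOn (fun r => u' r / Real.sqrt (1 - (u' r)^2)) (Ico (0:ℝ) R) :=
    hu'c.div hsdc fun r hr => (hspos r hr).ne'
  have hEc : ContinuousOn E (Ico (0:ℝ) R) :=
    (Real.continuous_sqrt.comp_continuousOn
      (continuousOn_const.add (hwc.pow 2))).add
      (continuousOn_const.mul (hFc.comp_continuousOn hu.continuousOn))
  -- derivative of E on the interior
  have hEderiv : ∀ r ∈ Ioo (0:ℝ) R, HasDerivAt E
      (-(((N:ℝ) - 1) / r * ((u' r)^2 / Real.sqrt (1 - (u' r)^2)))) r := by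
    intro r hr
    have hrmem : r ∈ Ico (0:ℝ) R := Ioo_subset_Ico_self hr
    have hnhds : Ico (0:ℝ) R ∈ nhds r := Ico_mem_nhds hr.1 hr.2
    have hwd : HasDerivAt (fun s => u' s / Real.sqrt (1 - (u' s) ^ 2))
        (-(((N : ℝ) - 1) / r * (u' r / Real.sqrt (1 - (u' r) ^ 2)) + lam * f (u r))) r :=
      (hode r hrmem hr.1).hasDerivAt hnhds
    have hud' : HasDerivAt u (u' r) r := (hu' r hrmem).hasDerivAt hnhds
    set w := u' r / Real.sqrt (1 - (u' r)^2) with hwdef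
    have hg := sqrt_one_add_sq_hasDerivAt w
    have h1 : HasDerivAt (fun s => Real.sqrt (1 + (u' s / Real.sqrt (1 - (u' s)^2))^2))
        (w / Real.sqrt (1 + w^2) *
          (-(((N : ℝ) - 1) / r * w + lam * f (u r)))) r := by
        have := hg.comp r hwd; exact this
    have h2 : HasDerivAt (fun s => lam * F (u s)) (lam * (f (u r) * u' r)) r :=
      ((hFder (u r)).comp r hud').const_mul lam
    have hid : w / Real.sqrt (1 + w^2) = u' r := by
      rw [hwdef, key_sqrt (hpos r hrmem)]
      have hs := (hspos r hrmem).ne'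
      field_simp
    have h3 : HasDerivAt E (w / Real.sqrt (1 + w^2) *
          (-(((N : ℝ) - 1) / r * w + lam * f (u r))) + lam * (f (u r) * u' r)) r := h1.add h2
    convert h3 using 1
    rw [hid]
    have hs := (hspos r hrmem).ne'
    rw [hwdef]
    field_simp
    ring
  -- E is antitone
  have hA : AntitoneOn E (Ico (0:ℝ) R) := by
    apply antitoneOn_of_deriv_nonpos (convex_Ico 0 R) hEc
    · rw [interior_Ico]
      exact fun r hr => (hEderiv r hr).differentiableAt.differentiableWithinAt
    · rw [interior_Ico]
      intro r hr
      rw [(hEderiv r hr).deriv]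
      have h1 : (0:ℝ) ≤ ((N:ℝ) - 1) / r := by
        apply div_nonneg _ hr.1.le
        have : (2:ℝ) ≤ (N:ℝ) := by exact_mod_cast hN
        linarith
      have h2 : (0:ℝ) ≤ (u' r)^2 / Real.sqrt (1 - (u' r)^2) :=
        div_nonneg (sq_nonneg _) (Real.sqrt_nonneg _)
      have := mul_nonneg h1 h2
      linarith
  have hE0 : E 0 = 1 + lam * F ζ := by
    simp [hEdef, hu'0, hu0]
  -- the main bound H(u'(r)) ≤ C
  have hH : ∀ r ∈ Ico (0:ℝ) R,
      (1 - Real.sqrt (1 - (u' r) ^ 2)) / Real.sqrt (1 - (u' r) ^ 2) ≤ C := by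
    intro r hr
    have hle : E r ≤ E 0 := hA hmem0 hr hr.1
    rw [hE0, hEeq r hr] at hle
    have hFm : m ≤ F (u r) := hF r hr
    have hs := hspos r hr
    have h1 : 1 / Real.sqrt (1 - (u' r)^2) - 1 ≤ C := by
      have : lam * m ≤ lam * F (u r) := mul_le_mul_of_nonneg_left hFm hlam.le
      rw [hCdef]
      nlinarith
    calc (1 - Real.sqrt (1 - (u' r) ^ 2)) / Real.sqrt (1 - (u' r) ^ 2)
        = 1 / Real.sqrt (1 - (u' r)^2) - 1 := by
          rw [sub_div, div_self hs.ne']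
      _ ≤ C := h1
  -- the squared bound
  have hsq : ∀ r ∈ Ico (0:ℝ) R, (u' r)^2 ≤ 1 - 1 / (1 + C)^2 := by
    intro r hr
    have hs := hspos r hr
    have hs2 : (Real.sqrt (1 - (u' r)^2))^2 = 1 - (u' r)^2 := Real.sq_sqrt (hpos r hr).le
    have hH' := hH r hr
    have h1C : (0:ℝ) < 1 + C := by linarith
    have h1 : 1 - Real.sqrt (1 - (u' r)^2) ≤ C * Real.sqrt (1 - (u' r)^2) :=
      (div_le_iff₀ hs).mp hH'
    have h2 : 1 ≤ (1 + C) * Real.sqrt (1 - (u' r)^2) := by nlinarith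
    have h3 : 1 / (1 + C)^2 ≤ (Real.sqrt (1 - (u' r)^2))^2 := by
      rw [div_le_iff₀ (by positivity)]
      nlinarith
    rw [hs2] at h3
    linarith
  refine ⟨hC0, hH, hsq, ?_⟩
  -- the epsilon bound
  have hlt1 : 1 - 1 / (1 + C)^2 < 1 := by
    have : (0:ℝ) < 1 / (1 + C)^2 := by positivity
    linarith
  have hnn : (0:ℝ) ≤ 1 - 1 / (1 + C)^2 := by
    have h1C : (1:ℝ) ≤ 1 + C := by linarith
    have : 1 / (1 + C)^2 ≤ 1 := by
      rw [div_le_one (by positivity)]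
      nlinarith
    linarith
  have hsqrtlt : Real.sqrt (1 - 1 / (1 + C)^2) < 1 := by
    have := Real.sqrt_lt_sqrt hnn hlt1
    rwa [Real.sqrt_one] at this
  refine ⟨1 - Real.sqrt (1 - 1 / (1 + C)^2), by linarith, fun r hr => ?_⟩
  have h1 : |u' r| = Real.sqrt ((u' r)^2) := (Real.sqrt_sq_eq_abs _).symm
  rw [h1]
  have h2 := Real.sqrt_le_sqrt (hsq r hr)
  linarith
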